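/- arXiv:1005.1052 — 7 statements merged into one kernel-verified Lean document; each statement's English description precedes it below -/
import Mathlib

section
/- Let X be a metric space, B ⊆ X a nonempty subset, n ≥ 1, F : B → ℝⁿ a map, and δ ≥ 0 such that | d(x,y) − ‖F(x) − F(y)‖ | ≤ δ for all x, y ∈ B. Let v ∈ ℝⁿ be a unit vector and define φ_v : X → ℝ by φ_v(x) = inf_{y∈B} ( d(x,y) + ⟨F(y), v⟩ ). Then for every x ∈ B one has ⟨F(x), v⟩ − δ ≤ φ_v(x) ≤ ⟨F(x), v⟩. -/
open scoped RealInnerProductSpace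

/-- If `F : B → ℝⁿ` almost preserves distances up to an additive
error `δ`, and `φ_v x = inf_{y ∈ B} (d(x,y) + ⟨F y, v⟩)` for a unit vector `v`,
then `⟨F x, v⟩ - δ ≤ φ_v x ≤ ⟨F x, v⟩` for every `x ∈ B`. -/
theorem stmt1 {X : Type*} [MetricSpace X] (B : Set X) (hBne : B.Nonempty)
    (n : ℕ) (hn : 1 ≤ n) (F : B → EuclideanSpace ℝ (Fin n)) (δ : ℝ) (hδ : 0 ≤ δ)
    (hF : ∀ x y : B, |dist (x : X) (y : X) - ‖F x - F y‖| ≤ δ)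
    (v : EuclideanSpace ℝ (Fin n)) (hv : ‖v‖ = 1)
    (φv : X → ℝ) (hφv : ∀ x : X, φv x = ⨅ y : B, (dist x (y : X) + ⟪F y, v⟫)) :
    ∀ x : B, ⟪F x, v⟫ - δ ≤ φv (x : X) ∧ φv (x : X) ≤ ⟪F x, v⟫ := by
  have : Nonempty B := hBne.to_subtype
  intro x
  have key : ∀ y : B, ⟪F x, v⟫ - δ ≤ dist (x : X) (y : X) + ⟪F y, v⟫ := by
    intro y
    have h1 : ⟪F x, v⟫ - ⟪F y, v⟫ ≤ ‖F x - F y‖ := by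
      have := real_inner_le_norm (F x - F y) v
      rw [inner_sub_left, hv, mul_one] at this
      linarith
    have h2 : ‖F x - F y‖ - dist (x : X) (y : X) ≤ δ := by
      have := abs_le.1 (hF x y); linarith [this.1]
    linarith
  constructor
  · rw [hφv]
    exact le_ciInf key
  · rw [hφv]
    have hb : BddBelow (Set.range fun y : B => dist (x : X) (y : X) + ⟪F y, v⟫) :=
      ⟨⟪F x, v⟫ - δ, by rintro _ ⟨y, rfl⟩; exact key y⟩
    calc (⨅ y : B, (dist (x : X) (y : X) + ⟪F y, v⟫))
        ≤ dist (x : X) (x : X) + ⟪F x, v⟫ := ciInf_le hb x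
      _ = ⟪F x, v⟫ := by simp
end

section
/- Let X be a metric space, B ⊆ X a nonempty subset, n ≥ 1, F : B → ℝⁿ a map, and δ ≥ 0 such that | d(x,y) − ‖F(x) − F(y)‖ | ≤ δ for all x, y ∈ B. Define φ : X → ℝⁿ by φ(x) = (φ_{e_1}(x), …, φ_{e_n}(x)). Then ‖φ(x) − F(x)‖ ≤ √n · δ for every x ∈ B. -/
open scoped RealInnerProductSpace

/-- With `F : B → ℝⁿ` almost preserving distances up to `δ`
and `φ = (φ_{e_1}, …, φ_{e_n})` where `φ_v x = inf_{y ∈ B} (d(x,y) + ⟨F y, v⟩)`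
and `(e_i)` is the standard orthonormal basis, one has
`‖φ x − F x‖ ≤ √n · δ` for every `x ∈ B`. -/
theorem stmt2 {X : Type*} [MetricSpace X] (B : Set X) (hBne : B.Nonempty)
    (n : ℕ) (hn : 1 ≤ n) (F : B → EuclideanSpace ℝ (Fin n)) (δ : ℝ) (hδ : 0 ≤ δ)
    (hF : ∀ x y : B, |dist (x : X) (y : X) - ‖F x - F y‖| ≤ δ)
    (φ : X → EuclideanSpace ℝ (Fin n))
    (hφ : ∀ (x : X) (i : Fin n),
      φ x i = ⨅ y : B, (dist x (y : X) + ⟪F y, EuclideanSpace.single i (1 : ℝ)⟫)) :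
    ∀ x : B, ‖φ (x : X) - F x‖ ≤ Real.sqrt n * δ := by
  intro x
  have hinner : ∀ (y : B) (i : Fin n),
      ⟪F y, EuclideanSpace.single i (1 : ℝ)⟫ = F y i := by
    intro y i
    simp [EuclideanSpace.inner_single_right]
  have key : ∀ i : Fin n, |φ (x : X) i - F x i| ≤ δ := by
    intro i
    have hlb : ∀ y : B, F x i - δ ≤ dist (x : X) (y : X) + ⟪F y, EuclideanSpace.single i (1 : ℝ)⟫ := by
      intro y
      rw [hinner]
      have h1 : ‖F x - F y‖ - δ ≤ dist (x : X) (y : X) := by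
        have := hF x y
        rw [abs_sub_comm, abs_le] at this
        linarith [this.1]
      have h2 : F x i - F y i ≤ ‖F x - F y‖ := by
        calc F x i - F y i ≤ |F x i - F y i| := le_abs_self _
        _ = |(F x - F y) i| := by simp
        _ ≤ ‖F x - F y‖ := by
            rw [EuclideanSpace.norm_eq, ← Real.sqrt_sq_eq_abs]
            apply Real.sqrt_le_sqrt
            have : (F x - F y) i ^ 2 ≤ ∑ j, ‖(F x - F y) j‖ ^ 2 := by
              apply Finset.single_le_sum (f := fun j => ‖(F x - F y) j‖ ^ 2)
                (fun j _ => by positivity) (Finset.mem_univ i) |>.trans_eq' ?_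
              simp [Real.norm_eq_abs, sq_abs]
            exact this
      linarith
    have hbdd : BddBelow (Set.range fun y : B =>
        dist (x : X) (y : X) + ⟪F y, EuclideanSpace.single i (1 : ℝ)⟫) :=
      ⟨F x i - δ, by rintro _ ⟨y, rfl⟩; exact hlb y⟩
    have hB : Nonempty B := hBne.to_subtype
    have hub : φ (x : X) i ≤ F x i := by
      rw [hφ]
      have := ciInf_le hbdd x
      simpa [hinner x i] using this
    have hlo : F x i - δ ≤ φ (x : X) i := by
      rw [hφ]
      exact le_ciInf hlb
    rw [abs_le]
    constructor <;> linarith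
  have hnorm : ‖φ (x : X) - F x‖ ≤ Real.sqrt (n * δ ^ 2) := by
    rw [EuclideanSpace.norm_eq]
    apply Real.sqrt_le_sqrt
    calc ∑ i, ‖(φ (x : X) - F x) i‖ ^ 2 ≤ ∑ _i : Fin n, δ ^ 2 := by
          apply Finset.sum_le_sum
          intro i _
          have : ‖(φ (x : X) - F x) i‖ = |φ (x : X) i - F x i| := by
            simp [Real.norm_eq_abs]
          rw [this]
          have := key i
          nlinarith [abs_nonneg (φ (x : X) i - F x i)]
      _ = n * δ ^ 2 := by simp [Finset.sum_const]
  calc ‖φ (x : X) - F x‖ ≤ Real.sqrt (n * δ ^ 2) := hnorm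
    _ = Real.sqrt n * δ := by
        rw [Real.sqrt_mul (Nat.cast_nonneg n), Real.sqrt_sq hδ]
end

section
/- Let X be a metric space, B ⊆ X a nonempty subset, n ≥ 1, F : B → ℝⁿ a map, and δ ≥ 0 such that | d(x,y) − ‖F(x) − F(y)‖ | ≤ δ for all x, y ∈ B. Define φ : X → ℝⁿ by φ(x) = (φ_{e_1}(x), …, φ_{e_n}(x)). Then | ‖φ(x) − φ(y)‖ − d(x,y) | ≤ (2√n + 1) δ for all x, y ∈ B. -/
open scoped RealInnerProductSpace

/-- With `F : B → ℝⁿ` almost preserving distances up to `δ`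
and `φ = (φ_{e_1}, …, φ_{e_n})` where `φ_v x = inf_{y ∈ B} (d(x,y) + ⟨F y, v⟩)`,
one has `| ‖φ x − φ y‖ − d(x,y) | ≤ (2√n + 1) δ` for all `x, y ∈ B`. -/
theorem stmt3 {X : Type*} [MetricSpace X] (B : Set X) (hBne : B.Nonempty)
    (n : ℕ) (hn : 1 ≤ n) (F : B → EuclideanSpace ℝ (Fin n)) (δ : ℝ) (hδ : 0 ≤ δ)
    (hF : ∀ x y : B, |dist (x : X) (y : X) - ‖F x - F y‖| ≤ δ)
    (φ : X → EuclideanSpace ℝ (Fin n))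
    (hφ : ∀ (x : X) (i : Fin n),
      φ x i = ⨅ y : B, (dist x (y : X) + ⟪F y, EuclideanSpace.single i (1 : ℝ)⟫)) :
    ∀ x y : B,
      |‖φ (x : X) - φ (y : X)‖ - dist (x : X) (y : X)| ≤ (2 * Real.sqrt n + 1) * δ := by
  have hφ' : ∀ (x : X) (i : Fin n), φ x i = ⨅ y : B, (dist x (y : X) + F y i) := by
    intro x i
    rw [hφ]
    congr 1; funext y
    congr 1
    simp [EuclideanSpace.inner_single_right]
  have hcoord : ∀ (u : EuclideanSpace ℝ (Fin n)) (i : Fin n), |u i| ≤ ‖u‖ := by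
    intro u i
    have h1 : |⟪u, EuclideanSpace.single i (1:ℝ)⟫| ≤ ‖u‖ * ‖EuclideanSpace.single i (1:ℝ)‖ :=
      abs_real_inner_le_norm _ _
    simpa [EuclideanSpace.inner_single_right, EuclideanSpace.norm_single] using h1
  have hclose : ∀ (x : B) (i : Fin n), |φ (x : X) i - F x i| ≤ δ := by
    intro x i
    have hlow : ∀ z : B, F x i - δ ≤ dist (x : X) (z : X) + F z i := by
      intro z
      have h1 := hF x z
      have h2 : ‖F x - F z‖ - δ ≤ dist (x : X) (z : X) := by
        have := abs_le.1 h1; linarith [this.1]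
      have h3 : F x i - F z i ≤ ‖F x - F z‖ := by
        have := (le_abs_self ((F x - F z) i)).trans (hcoord (F x - F z) i)
        simpa using this
      linarith
    have hbdd : BddBelow (Set.range fun z : B => dist (x : X) (z : X) + F z i) :=
      ⟨F x i - δ, by rintro _ ⟨z, rfl⟩; exact hlow z⟩
    have hub : φ (x : X) i ≤ F x i := by
      rw [hφ']
      have := ciInf_le hbdd x
      simpa using this
    have hlb : F x i - δ ≤ φ (x : X) i := by
      rw [hφ']
      have : Nonempty B := hBne.to_subtype
      exact le_ciInf hlow
    rw [abs_le]; constructor <;> linarith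
  have hnorm : ∀ x : B, ‖φ (x : X) - F x‖ ≤ Real.sqrt n * δ := by
    intro x
    rw [EuclideanSpace.norm_eq]
    have hsum : ∑ i, ‖(φ (x : X) - F x) i‖ ^ 2 ≤ (n : ℝ) * δ ^ 2 := by
      calc ∑ i, ‖(φ (x : X) - F x) i‖ ^ 2 ≤ ∑ _i : Fin n, δ ^ 2 := by
            apply Finset.sum_le_sum
            intro i _
            have h := hclose x i
            have : ‖(φ (x : X) - F x) i‖ = |φ (x : X) i - F x i| := by simp
            rw [this]
            exact pow_le_pow_left₀ (abs_nonneg _) h 2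
        _ = (n : ℝ) * δ ^ 2 := by simp [mul_comm]
    calc Real.sqrt (∑ i, ‖(φ (x : X) - F x) i‖ ^ 2) ≤ Real.sqrt ((n : ℝ) * δ ^ 2) :=
          Real.sqrt_le_sqrt hsum
      _ = Real.sqrt n * δ := by
          rw [Real.sqrt_mul (Nat.cast_nonneg n), Real.sqrt_sq hδ]
  intro x y
  have h1 : |‖φ (x : X) - φ (y : X)‖ - ‖F x - F y‖| ≤ 2 * Real.sqrt n * δ := by
    have h2 : |‖φ (x : X) - φ (y : X)‖ - ‖F x - F y‖| ≤ ‖(φ (x : X) - φ (y : X)) - (F x - F y)‖ :=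
      abs_norm_sub_norm_le _ _
    have h3 : (φ (x : X) - φ (y : X)) - (F x - F y) = (φ (x : X) - F x) - (φ (y : X) - F y) := by
      abel
    have h4 : ‖(φ (x : X) - F x) - (φ (y : X) - F y)‖ ≤ ‖φ (x : X) - F x‖ + ‖φ (y : X) - F y‖ :=
      norm_sub_le _ _
    have := hnorm x; have := hnorm y
    rw [h3] at h2
    linarith
  have h5 := hF x y
  have h6 := abs_sub_abs_le_abs_sub (‖φ (x : X) - φ (y : X)‖ - dist (x : X) (y : X)) 0
  calc |‖φ (x : X) - φ (y : X)‖ - dist (x : X) (y : X)|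
      ≤ |‖φ (x : X) - φ (y : X)‖ - ‖F x - F y‖| + |‖F x - F y‖ - dist (x : X) (y : X)| :=
        abs_sub_le _ _ _
    _ ≤ 2 * Real.sqrt n * δ + δ := by
        have : |‖F x - F y‖ - dist (x : X) (y : X)| = |dist (x : X) (y : X) - ‖F x - F y‖| := abs_sub_comm _ _
        rw [this]; linarith
    _ = (2 * Real.sqrt n + 1) * δ := by ring
end

section
/- Let f : ℝⁿ → ℝⁿ be a map such that each coordinate function x ↦ f(x)_i (i = 1,…,n) is 1-Lipschitz with respect to the Euclidean distance on ℝⁿ. Then f does not increase Lebesgue measure: for every set A ⊆ ℝⁿ, the Lebesgue outer measure of the image f(A) is at most the Lebesgue outer measure of A. -/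
open MeasureTheory Module Finset Matrix

/-- Hadamard's inequality: the determinant of a family of vectors with respect to an
orthonormal basis is bounded by the product of their norms. -/
lemma my_hadamard_ineq {n : ℕ}
    (b : OrthonormalBasis (Fin n) ℝ (EuclideanSpace ℝ (Fin n)))
    (w : Fin n → EuclideanSpace ℝ (Fin n)) :
    |b.toBasis.det w| ≤ ∏ i, ‖w i‖ := by
  classical
  haveI : Fact (finrank ℝ (EuclideanSpace ℝ (Fin n)) = n) := ⟨finrank_euclideanSpace_fin⟩
  have h1 : (b.toBasis.orientation).volumeForm = b.toBasis.det :=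
    Orientation.volumeForm_robust _ b rfl
  calc |b.toBasis.det w| = |(b.toBasis.orientation).volumeForm w| := by rw [h1]
    _ ≤ ∏ i, ‖w i‖ := Orientation.abs_volumeForm_apply_le _ w

/-- A linear map on Euclidean space whose coordinate functionals all have norm at most one
has determinant of absolute value at most one. -/
lemma my_det_le_one (n : ℕ) (A : EuclideanSpace ℝ (Fin n) →L[ℝ] EuclideanSpace ℝ (Fin n))
    (hA : ∀ (i : Fin n) (v : EuclideanSpace ℝ (Fin n)), |A v i| ≤ ‖v‖) : |A.det| ≤ 1 := by
  classical
  set b := EuclideanSpace.basisFun (Fin n) ℝ with hb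
  set φ : Fin n → (EuclideanSpace ℝ (Fin n) →L[ℝ] ℝ) :=
    fun i => (EuclideanSpace.proj i).comp A with hφdef
  have hφ : ∀ i, ‖φ i‖ ≤ 1 := fun i =>
    ContinuousLinearMap.opNorm_le_bound _ zero_le_one
      (fun v => by simpa [hφdef] using hA i v)
  set w : Fin n → EuclideanSpace ℝ (Fin n) :=
    fun i => (InnerProductSpace.toDual ℝ (EuclideanSpace ℝ (Fin n))).symm (φ i) with hwdef
  have hw : ∀ i, ‖w i‖ ≤ 1 := fun i => by
    simpa only [hwdef, LinearIsometryEquiv.norm_map] using hφ i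
  have hwk : ∀ j k, w j k = A (b.toBasis k) j := by
    intro j k
    have h1 : (inner ℝ (w j) (b.toBasis k) : ℝ) = φ j (b.toBasis k) :=
      InnerProductSpace.toDual_symm_apply
    have h2 : (inner ℝ (w j) (b.toBasis k) : ℝ) = w j k := by
      rw [real_inner_comm]
      rw [show b.toBasis k = EuclideanSpace.single k 1 by
        simp [hb, EuclideanSpace.basisFun_apply]]
      rw [EuclideanSpace.inner_single_left]
      simp
    rw [← h2, h1]
    simp [hφdef]
  have hdet : b.toBasis.det w = A.det := by
    have hmat : b.toBasis.toMatrix w =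
        (LinearMap.toMatrix b.toBasis b.toBasis
          (A : EuclideanSpace ℝ (Fin n) →ₗ[ℝ] EuclideanSpace ℝ (Fin n)))ᵀ := by
      apply Matrix.ext
      intro k j
      rw [Basis.toMatrix_apply, Matrix.transpose_apply, LinearMap.toMatrix_apply]
      have hrepr : ∀ (v : EuclideanSpace ℝ (Fin n)) (i : Fin n),
          b.toBasis.repr v i = v i := fun v i => by
        rw [b.coe_toBasis_repr_apply, EuclideanSpace.basisFun_repr]
      rw [hrepr, hrepr]
      simpa using hwk j k
    rw [Basis.det_apply, hmat, Matrix.det_transpose, LinearMap.det_toMatrix]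
  calc |A.det| = |b.toBasis.det w| := by rw [hdet]
    _ ≤ ∏ i, ‖w i‖ := my_hadamard_ineq b w
    _ ≤ 1 := Finset.prod_le_one (fun i _ => norm_nonneg _) (fun i _ => hw i)

/-- A map with 1-Lipschitz coordinates is `√n`-Lipschitz. -/
lemma my_lipschitz (n : ℕ) (f : EuclideanSpace ℝ (Fin n) → EuclideanSpace ℝ (Fin n))
    (hf : ∀ i : Fin n, LipschitzWith 1 (fun x => f x i)) :
    LipschitzWith (NNReal.sqrt n) f := by
  apply LipschitzWith.of_dist_le_mul
  intro x y
  rw [EuclideanSpace.dist_eq]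
  have h2 : ∑ i, dist (f x i) (f y i) ^ 2 ≤ (n : ℝ) * dist x y ^ 2 := by
    calc ∑ i, dist (f x i) (f y i) ^ 2 ≤ ∑ _i : Fin n, dist x y ^ 2 := by
          refine Finset.sum_le_sum (fun i _ => ?_)
          have h := (hf i).dist_le_mul x y
          rw [NNReal.coe_one, one_mul] at h
          exact pow_le_pow_left₀ dist_nonneg h 2
      _ = (n : ℝ) * dist x y ^ 2 := by simp [Finset.sum_const, nsmul_eq_mul]
  calc Real.sqrt (∑ i, dist (f x i) (f y i) ^ 2)
      ≤ Real.sqrt ((n : ℝ) * dist x y ^ 2) := Real.sqrt_le_sqrt h2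
    _ = (NNReal.sqrt n : ℝ) * dist x y := by
        rw [Real.sqrt_mul (by positivity), Real.sqrt_sq dist_nonneg]
        norm_num

/-- A Lipschitz map on Euclidean space maps null sets to null sets. -/
lemma my_image_null (n : ℕ) {f : EuclideanSpace ℝ (Fin n) → EuclideanSpace ℝ (Fin n)}
    {K : NNReal} (hf : LipschitzWith K f) {N : Set (EuclideanSpace ℝ (Fin n))}
    (hN : volume N = 0) : volume (f '' N) = 0 := by
  have hfr : ((n : ℕ) : ℝ) = ((finrank ℝ (EuclideanSpace ℝ (Fin n)) : ℕ) : ℝ) := by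
    simp [finrank_euclideanSpace]
  haveI : (μH[(n : ℝ)] : Measure (EuclideanSpace ℝ (Fin n))).IsAddHaarMeasure := by
    rw [hfr]; infer_instance
  have e1 : (μH[(n : ℝ)] : Measure (EuclideanSpace ℝ (Fin n))) =
      Measure.addHaarScalarFactor (μH[(n : ℝ)] : Measure (EuclideanSpace ℝ (Fin n))) volume
        • volume :=
    Measure.isAddLeftInvariant_eq_smul _ _
  have e2 : (volume : Measure (EuclideanSpace ℝ (Fin n))) =
      Measure.addHaarScalarFactor (volume : Measure (EuclideanSpace ℝ (Fin n))) μH[(n : ℝ)]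
        • μH[(n : ℝ)] :=
    Measure.isAddLeftInvariant_eq_smul _ _
  have h1 : (μH[(n : ℝ)] : Measure (EuclideanSpace ℝ (Fin n))) N = 0 := by
    rw [e1]; simp [hN]
  have h2 : (μH[(n : ℝ)] : Measure (EuclideanSpace ℝ (Fin n))) (f '' N) = 0 := by
    have h3 := hf.hausdorffMeasure_image_le (d := (n : ℝ)) (by positivity) N
    rw [h1, mul_zero] at h3
    exact le_antisymm h3 zero_le
  rw [e2]
  simp [h2]

/-- A map `f : ℝⁿ → ℝⁿ` whose coordinate functions are all
1-Lipschitz does not increase Lebesgue (outer) measure of any set. -/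
theorem stmt4 (n : ℕ) (f : EuclideanSpace ℝ (Fin n) → EuclideanSpace ℝ (Fin n))
    (hf : ∀ i : Fin n, LipschitzWith 1 (fun x => f x i)) :
    ∀ A : Set (EuclideanSpace ℝ (Fin n)), volume (f '' A) ≤ volume A := by
  intro A
  have hL : LipschitzWith (NNReal.sqrt n) f := my_lipschitz n f hf
  set B := toMeasurable (volume : Measure (EuclideanSpace ℝ (Fin n))) A with hB
  set D := {x : EuclideanSpace ℝ (Fin n) | DifferentiableAt ℝ f x} with hD
  have hDmeas : MeasurableSet D := measurableSet_of_differentiableAt ℝ f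
  have hDc : volume Dᶜ = 0 := by
    have h := hL.ae_differentiableAt (μ := volume)
    simpa [hD, ae_iff, Set.compl_setOf] using h
  set S := B ∩ D with hS
  have hSmeas : MeasurableSet S := (measurableSet_toMeasurable _ _).inter hDmeas
  have hderiv : ∀ x ∈ S, HasFDerivWithinAt f (fderiv ℝ f x) S x := fun x hx =>
    (hx.2.hasFDerivAt).hasFDerivWithinAt
  have hdet : ∀ x ∈ S, |(fderiv ℝ f x).det| ≤ 1 := by
    intro x hx
    refine my_det_le_one n (fderiv ℝ f x) (fun i v => ?_)
    have h1 : HasFDerivAt (fun y => f y i)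
        ((EuclideanSpace.proj (𝕜 := ℝ) i).comp (fderiv ℝ f x)) x :=
      (EuclideanSpace.proj (𝕜 := ℝ) i).hasFDerivAt.comp x hx.2.hasFDerivAt
    have h2 : ‖(EuclideanSpace.proj (𝕜 := ℝ) i).comp (fderiv ℝ f x)‖ ≤ 1 := by
      have h3 := norm_fderiv_le_of_lipschitz ℝ (hf i) (x₀ := x)
      rw [h1.fderiv] at h3
      simpa using h3
    have h4 := ((EuclideanSpace.proj (𝕜 := ℝ) i).comp (fderiv ℝ f x)).le_opNorm v
    calc |(fderiv ℝ f x) v i|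
        = ‖((EuclideanSpace.proj (𝕜 := ℝ) i).comp (fderiv ℝ f x)) v‖ := by
          simp [Real.norm_eq_abs]
      _ ≤ ‖(EuclideanSpace.proj (𝕜 := ℝ) i).comp (fderiv ℝ f x)‖ * ‖v‖ := h4
      _ ≤ 1 * ‖v‖ := mul_le_mul_of_nonneg_right h2 (norm_nonneg v)
      _ = ‖v‖ := one_mul _
  have himage : volume (f '' S) ≤ volume A := by
    calc volume (f '' S) ≤ ∫⁻ x in S, ENNReal.ofReal |(fderiv ℝ f x).det| ∂volume :=
          addHaar_image_le_lintegral_abs_det_fderiv volume hSmeas hderiv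
      _ ≤ ∫⁻ _x in S, 1 ∂volume := by
          refine lintegral_mono_ae ?_
          filter_upwards [self_mem_ae_restrict hSmeas] with x hx
          exact ENNReal.ofReal_le_one.2 (hdet x hx)
      _ = volume S := by simp
      _ ≤ volume B := measure_mono Set.inter_subset_left
      _ = volume A := measure_toMeasurable A
  have hnull : volume (f '' (B \ D)) = 0 := by
    refine my_image_null n hL (measure_mono_null (fun x hx => hx.2) hDc)
  calc volume (f '' A) ≤ volume (f '' (S ∪ (B \ D))) := by
        refine measure_mono (Set.image_mono ?_)
        intro x hx
        by_cases hxD : x ∈ D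
        · exact Or.inl ⟨subset_toMeasurable _ _ hx, hxD⟩
        · exact Or.inr ⟨subset_toMeasurable _ _ hx, hxD⟩
    _ ≤ volume (f '' S) + volume (f '' (B \ D)) := by
        rw [Set.image_union]; exact measure_union_le _ _
    _ ≤ volume A + 0 := add_le_add himage hnull.le
    _ = volume A := add_zero _
end

section
/- Let X and Y be sets equipped with measures μ and ν respectively (applied to arbitrary subsets via the induced outer measures), with μ(X) < ∞, and let f : X → Y be a map such that ν( f(A) ) ≤ μ(A) for every subset A ⊆ X. Suppose ε ∈ [0,∞] satisfies ν( f(X) ) + ε ≥ μ(X). Then for every μ-measurable set E ⊆ X one has ν( f(E) ) + ε ≥ μ(E). -/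
open MeasureTheory

/-- If `f : X → Y` does not increase measure (`ν(f(A)) ≤ μ(A)` for
every set `A`), `μ(X) < ∞`, and `ν(f(X)) + ε ≥ μ(X)`, then
`ν(f(E)) + ε ≥ μ(E)` for every measurable `E ⊆ X`. -/
theorem stmt9 {X Y : Type*} [MeasurableSpace X] [MeasurableSpace Y]
    (μ : Measure X) (ν : Measure Y) (hμfin : μ Set.univ < ⊤)
    (f : X → Y) (hf : ∀ A : Set X, ν (f '' A) ≤ μ A)
    (ε : ENNReal) (hε : μ Set.univ ≤ ν (f '' Set.univ) + ε) :
    ∀ E : Set X, MeasurableSet E → μ E ≤ ν (f '' E) + ε := by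
  intro E hE
  have hc : μ Eᶜ ≠ ⊤ := (lt_of_le_of_lt (measure_mono (Set.subset_univ _)) hμfin).ne
  have hsplit : μ E + μ Eᶜ = μ Set.univ := measure_add_measure_compl hE
  have himg : ν (f '' Set.univ) ≤ ν (f '' E) + μ Eᶜ := by
    calc ν (f '' Set.univ) ≤ ν (f '' E ∪ f '' Eᶜ) := by
          apply measure_mono
          rw [← Set.image_union, Set.union_compl_self]
      _ ≤ ν (f '' E) + ν (f '' Eᶜ) := measure_union_le _ _
      _ ≤ ν (f '' E) + μ Eᶜ := add_le_add_right (hf Eᶜ) _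
  have key : μ E + μ Eᶜ ≤ ν (f '' E) + ε + μ Eᶜ := by
    rw [hsplit]
    calc μ Set.univ ≤ ν (f '' Set.univ) + ε := hε
      _ ≤ ν (f '' E) + μ Eᶜ + ε := add_le_add_left himg _
      _ = ν (f '' E) + ε + μ Eᶜ := by ring
  exact (ENNReal.add_le_add_iff_right hc).mp key
end

section
/- Let X be a metric space, μ a Borel measure on X, and γ : [0,1] → X a continuous curve with endpoints x = γ(0) and y = γ(1). Let r > 0 with d(x,y) ≥ r, let s > 0, and let ν ≥ 0 (an extended nonnegative real) be such that μ( B(γ(t), s) ) ≥ ν for every t ∈ [0,1]. Set N = ⌊ r/(2s) ⌋ + 1. Then μ( { w ∈ X : dist( w, γ([0,1]) ) < s } ) ≥ N · ν. -/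
open MeasureTheory

/-- Packing lemma along a curve: if `γ : [0,1] → X` is a
continuous curve with `d(γ 0, γ 1) ≥ r > 0`, `s > 0`, and every ball
`B(γ t, s)` has measure at least `ν`, then the open `s`-neighborhood of the
curve has measure at least `N·ν`, where `N = ⌊r/(2s)⌋ + 1`. -/
theorem stmt14 {X : Type*} [MetricSpace X] [MeasurableSpace X] [BorelSpace X]
    (μ : Measure X) (γ : ℝ → X) (hγ : ContinuousOn γ (Set.Icc 0 1))
    (r : ℝ) (hr : 0 < r) (hxy : r ≤ dist (γ 0) (γ 1))
    (s : ℝ) (hs : 0 < s) (ν : ENNReal)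
    (hball : ∀ t ∈ Set.Icc (0 : ℝ) 1, ν ≤ μ (Metric.ball (γ t) s)) :
    (((Nat.floor (r / (2 * s)) + 1 : ℕ)) : ENNReal) * ν ≤
      μ {w : X | Metric.infDist w (γ '' Set.Icc 0 1) < s} := by
  set N : ℕ := Nat.floor (r / (2 * s)) + 1 with hN
  have h2s : (0:ℝ) < 2 * s := by linarith
  have hfc : ContinuousOn (fun t => dist (γ 0) (γ t)) (Set.Icc (0:ℝ) 1) :=
    (continuous_const.dist continuous_id).comp_continuousOn hγ
  have ivt := intermediate_value_Icc (by norm_num : (0:ℝ) ≤ 1) hfc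
  have key : ∀ k : Fin N, ∃ u, u ∈ Set.Icc (0:ℝ) 1 ∧ dist (γ 0) (γ u) = 2 * s * k := by
    intro k
    have hk : (k : ℕ) ≤ Nat.floor (r / (2 * s)) := Nat.lt_succ_iff.mp k.isLt
    have hkr : 2 * s * (k : ℝ) ≤ r := by
      have h1 : ((k : ℕ) : ℝ) ≤ r / (2 * s) :=
        le_trans (Nat.cast_le.mpr hk) (Nat.floor_le (by positivity))
      calc 2 * s * (k : ℝ) ≤ 2 * s * (r / (2 * s)) := by nlinarith
        _ = r := by field_simp
    have hmem : 2 * s * (k : ℝ) ∈ Set.Icc (dist (γ 0) (γ 0)) (dist (γ 0) (γ 1)) := by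
      simp only [dist_self]
      constructor
      · positivity
      · linarith
    obtain ⟨u, hu, hu'⟩ := ivt hmem
    exact ⟨u, hu, hu'⟩
  choose t ht hd using key
  have hdisj : Pairwise (Function.onFun Disjoint (fun k : Fin N => Metric.ball (γ (t k)) s)) := by
    intro j k hjk
    apply Metric.ball_disjoint_ball
    have h1 : (1:ℝ) ≤ |(j : ℝ) - (k : ℝ)| := by
      have : ((j:ℤ) - (k:ℤ)) ≠ 0 := by
        rw [sub_ne_zero]
        intro h
        exact hjk (Fin.ext (by exact_mod_cast h))
      have := Int.one_le_abs this
      push_cast at this ⊢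
      exact_mod_cast this
    have h2 : |dist (γ 0) (γ (t j)) - dist (γ 0) (γ (t k))| ≤ dist (γ (t j)) (γ (t k)) := by
      rw [dist_comm (γ 0) (γ (t j)), dist_comm (γ 0) (γ (t k))]
      exact abs_dist_sub_le _ _ _
    rw [hd j, hd k] at h2
    have h3 : |2 * s * (j:ℝ) - 2 * s * (k:ℝ)| = 2 * s * |(j:ℝ) - (k:ℝ)| := by
      rw [← mul_sub, abs_mul, abs_of_pos h2s]
    nlinarith [abs_nonneg ((j:ℝ) - (k:ℝ))]
  have hmeas : ∀ k : Fin N, MeasurableSet (Metric.ball (γ (t k)) s) :=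
    fun k => Metric.isOpen_ball.measurableSet
  have hsub : (⋃ k : Fin N, Metric.ball (γ (t k)) s) ⊆
      {w : X | Metric.infDist w (γ '' Set.Icc 0 1) < s} := by
    rintro w hw
    simp only [Set.mem_iUnion] at hw
    obtain ⟨k, hk⟩ := hw
    have : Metric.infDist w (γ '' Set.Icc 0 1) ≤ dist w (γ (t k)) :=
      Metric.infDist_le_dist_of_mem ⟨t k, ht k, rfl⟩
    exact lt_of_le_of_lt this (Metric.mem_ball.mp hk)
  calc ((N : ℕ) : ENNReal) * ν = ∑ k : Fin N, ν := by
        simp [Finset.sum_const, mul_comm]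
    _ ≤ ∑ k : Fin N, μ (Metric.ball (γ (t k)) s) :=
        Finset.sum_le_sum fun k _ => hball (t k) (ht k)
    _ = μ (⋃ k : Fin N, Metric.ball (γ (t k)) s) := by
        rw [measure_iUnion hdisj hmeas, tsum_fintype]
    _ ≤ μ {w : X | Metric.infDist w (γ '' Set.Icc 0 1) < s} := measure_mono hsub
end

section
/- Let E and F be real inner product spaces with dim E = n (1 ≤ n < ∞), and let T : E → F be a linear map such that Σ_{j=1}^{n} ‖ T(w_j) ‖² ≤ n for some orthonormal basis (w_1, …, w_n) of E. Then T does not increase n-dimensional Hausdorff measure: μH[n]( T(A) ) ≤ μH[n]( A ) for every set A ⊆ E. -/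
open MeasureTheory Module Set Matrix ENNReal NNReal

lemma trace_eq_sum_eig {n : Type*} [Fintype n] [DecidableEq n] {A : Matrix n n ℝ}
    (hA : A.IsHermitian) : A.trace = ∑ i, hA.eigenvalues i := by
  have h := hA.trace_eq_sum_eigenvalues
  simpa using h

lemma det_abs_le_one {n : ℕ} (hn : 0 < n) (M : Matrix (Fin n) (Fin n) ℝ)
    (htr : (Mᴴ * M).trace ≤ (n : ℝ)) : |M.det| ≤ 1 := by
  have hps := Matrix.posSemidef_conjTranspose_mul_self M
  have hH := hps.1
  set lam := hH.eigenvalues with hl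
  have hnn : ∀ i, 0 ≤ lam i := hps.eigenvalues_nonneg
  have hsum : ∑ i, lam i ≤ (n : ℝ) := by
    rw [← trace_eq_sum_eig hH]; exact htr
  have hprod : ∏ i, lam i ≤ 1 := by
    have h1 : ∏ i, lam i ^ ((n : ℝ)⁻¹) ≤ ∑ i : Fin n, (n : ℝ)⁻¹ * lam i := by
      apply Real.geom_mean_le_arith_mean_weighted
      · intro i _; positivity
      · simp [Finset.card_fin]
        field_simp
      · intro i _; exact hnn i
    have h2 : ∑ i : Fin n, (n : ℝ)⁻¹ * lam i ≤ 1 := by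
      rw [← Finset.mul_sum]
      calc (n:ℝ)⁻¹ * ∑ i, lam i ≤ (n:ℝ)⁻¹ * n := by
            apply mul_le_mul_of_nonneg_left hsum; positivity
        _ = 1 := by field_simp
    have h3 : (∏ i, lam i) ^ ((n : ℝ)⁻¹) ≤ 1 := by
      rw [← Real.finset_prod_rpow _ _ (fun i _ => hnn i)]
      exact h1.trans h2
    have hp0 : (0:ℝ) ≤ ∏ i, lam i := Finset.prod_nonneg (fun i _ => hnn i)
    have : (∏ i, lam i) = ((∏ i, lam i) ^ ((n : ℝ)⁻¹)) ^ (n : ℕ) := by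
      rw [← Real.rpow_natCast ((∏ i, lam i) ^ ((n : ℝ)⁻¹)) n, ← Real.rpow_mul hp0,
        inv_mul_cancel₀ (by exact_mod_cast hn.ne'), Real.rpow_one]
    rw [this]
    exact pow_le_one₀ (Real.rpow_nonneg hp0 _) h3
  have hdet : M.det ^ 2 = ∏ i, lam i := by
    have := hH.det_eq_prod_eigenvalues
    rw [Matrix.det_mul, Matrix.det_conjTranspose] at this
    rw [star_trivial] at this
    rw [sq]; exact this
  rw [← sq_le_one_iff_abs_le_one, hdet]
  exact hprod

lemma hausdorff_isAddHaar (E : Type*) [NormedAddCommGroup E] [NormedSpace ℝ E]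
    [MeasurableSpace E] [BorelSpace E] [FiniteDimensional ℝ E] :
    (μH[(finrank ℝ E : ℝ)] : Measure E).IsAddHaarMeasure := by
  set n := finrank ℝ E with hn
  let e : E ≃L[ℝ] (Fin n → ℝ) :=
    ContinuousLinearEquiv.ofFinrankEq (by rw [Module.finrank_fin_fun])
  have hμ : (μH[(n : ℝ)] : Measure (Fin n → ℝ)) = volume := by
    simpa using hausdorffMeasure_pi_real (ι := Fin n)
  have hlip : LipschitzWith ‖(e : E →L[ℝ] (Fin n → ℝ))‖₊ e := (e : E →L[ℝ] (Fin n → ℝ)).lipschitz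
  have hlip' : LipschitzWith ‖(e.symm : (Fin n → ℝ) →L[ℝ] E)‖₊ e.symm :=
    (e.symm : (Fin n → ℝ) →L[ℝ] E).lipschitz
  have hfin : IsFiniteMeasureOnCompacts (μH[(n : ℝ)] : Measure E) := by
    constructor
    intro K hK
    have himg : K = e.symm '' (e '' K) := by
      rw [Set.image_image]; simp
    calc μH[(n : ℝ)] K = μH[(n : ℝ)] (e.symm '' (e '' K)) := by rw [← himg]
      _ ≤ (‖(e.symm : (Fin n → ℝ) →L[ℝ] E)‖₊ : ℝ≥0∞) ^ (n : ℝ) * μH[(n : ℝ)] (e '' K) :=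
          hlip'.hausdorffMeasure_image_le (by positivity) _
      _ < ⊤ := by
          rw [hμ]
          exact ENNReal.mul_lt_top (ENNReal.rpow_lt_top_of_nonneg (by positivity)
            ENNReal.coe_ne_top) (hK.image e.continuous).measure_lt_top
  have hopen : (μH[(n : ℝ)] : Measure E).IsOpenPosMeasure := by
    constructor
    intro U hU hne h0
    have h1 : μH[(n : ℝ)] (e '' U) ≤ (‖(e : E →L[ℝ] (Fin n → ℝ))‖₊ : ℝ≥0∞) ^ (n : ℝ) *
        μH[(n : ℝ)] U := hlip.hausdorffMeasure_image_le (by positivity) _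
    rw [h0, mul_zero, le_zero_iff, hμ] at h1
    exact (e.toHomeomorph.isOpenMap U hU).measure_ne_zero volume (hne.image e) h1
  exact { toIsFiniteMeasureOnCompacts := hfin, toIsOpenPosMeasure := hopen,
          map_add_left_eq_self := (by infer_instance :
            (μH[(n : ℝ)] : Measure E).IsAddLeftInvariant).map_add_left_eq_self }

-- |det L| ≤ 1 from the trace condition, linear map version
lemma linmap_det_le_one {E : Type*} [NormedAddCommGroup E] [InnerProductSpace ℝ E]
    {n : ℕ} (hn : 0 < n) (hdim : finrank ℝ E = n) (w : OrthonormalBasis (Fin n) ℝ E)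
    (L : E →ₗ[ℝ] E) (hL : ∑ j : Fin n, ‖L (w j)‖ ^ 2 ≤ (n : ℝ)) :
    |LinearMap.det L| ≤ 1 := by
  set M := LinearMap.toMatrix w.toBasis w.toBasis L with hM
  have hdet : LinearMap.det L = M.det := by rw [hM, ← LinearMap.det_toMatrix w.toBasis]
  have hnorm : ∀ x : E, ‖x‖ ^ 2 = ∑ i : Fin n, (w.repr x i) ^ 2 := by
    intro x
    have h1 : ‖x‖ = ‖w.repr x‖ := (w.repr.norm_map x).symm
    rw [h1, EuclideanSpace.norm_eq, Real.sq_sqrt (by positivity)]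
    simp [sq_abs]
  have hcol : ∀ j, ‖L (w j)‖ ^ 2 = ∑ i : Fin n, (M i j) ^ 2 := by
    intro j
    rw [hnorm]
    congr 1; ext i
    congr 1
    rw [hM, LinearMap.toMatrix_apply, OrthonormalBasis.coe_toBasis_repr_apply,
      OrthonormalBasis.coe_toBasis]
  have htr : (Mᴴ * M).trace ≤ (n : ℝ) := by
    have : (Mᴴ * M).trace = ∑ j : Fin n, ∑ i : Fin n, (M i j) ^ 2 := by
      rw [Matrix.trace]
      congr 1; ext j
      simp [Matrix.mul_apply, Matrix.diag, sq]
    rw [this]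
    calc ∑ j : Fin n, ∑ i : Fin n, (M i j) ^ 2 = ∑ j : Fin n, ‖L (w j)‖ ^ 2 := by
          congr 1; ext j; rw [hcol]
      _ ≤ (n : ℝ) := hL
  rw [hdet]
  exact det_abs_le_one hn M htr

/-- If `T : E → F` is a linear map between real inner product
spaces, `dim E = n ≥ 1`, and `Σ ‖T wⱼ‖² ≤ n` for some orthonormal basis
`(w₁,…,wₙ)` of `E`, then `T` does not increase `n`-dimensional Hausdorff
measure. -/
theorem stmt15 {E F : Type*} [NormedAddCommGroup E] [InnerProductSpace ℝ E]
    [NormedAddCommGroup F] [InnerProductSpace ℝ F]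
    [MeasurableSpace E] [BorelSpace E] [MeasurableSpace F] [BorelSpace F]
    (n : ℕ) (hn : 1 ≤ n) (hdim : Module.finrank ℝ E = n)
    (T : E →ₗ[ℝ] F) (w : OrthonormalBasis (Fin n) ℝ E)
    (hT : ∑ j : Fin n, ‖T (w j)‖ ^ 2 ≤ (n : ℝ)) :
    ∀ A : Set E, μH[(n : ℝ)] (T '' A) ≤ μH[(n : ℝ)] A := by
  intro A
  haveI : FiniteDimensional ℝ E := Module.Basis.finiteDimensional_of_finite w.toBasis
  set K := LinearMap.range T with hKdef
  haveI : FiniteDimensional ℝ K := inferInstance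
  by_cases hinj : Function.Injective T
  · -- injective case
    have hK : finrank ℝ K = n := by rw [LinearMap.finrank_range_of_inj hinj, hdim]
    let b : OrthonormalBasis (Fin n) ℝ K :=
      (stdOrthonormalBasis ℝ K).reindex (finCongr hK)
    let g : K ≃ₗᵢ[ℝ] E := b.repr.trans w.repr.symm
    let L : E →ₗ[ℝ] E := (g : K →ₗ[ℝ] E) ∘ₗ T.rangeRestrict
    have hLnorm : ∀ x : E, ‖L x‖ = ‖T x‖ := by
      intro x
      show ‖g (T.rangeRestrict x)‖ = ‖T x‖
      rw [g.norm_map]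
      rfl
    let φ : E →ₗᵢ[ℝ] F := K.subtypeₗᵢ.comp g.symm.toLinearIsometry
    have himg : T '' A = φ '' (L '' A) := by
      rw [Set.image_image]
      apply Set.image_congr
      intro x _
      show T x = φ (g (T.rangeRestrict x))
      simp only [φ, LinearIsometry.coe_comp, Function.comp_apply,
        LinearIsometryEquiv.coe_toLinearIsometry]
      rw [LinearIsometryEquiv.symm_apply_apply]
      rfl
    have hdet : |LinearMap.det L| ≤ 1 := by
      apply linmap_det_le_one (lt_of_lt_of_le Nat.zero_lt_one hn) hdim w L
      calc ∑ j : Fin n, ‖L (w j)‖ ^ 2 = ∑ j : Fin n, ‖T (w j)‖ ^ 2 := by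
            congr 1; ext j; rw [hLnorm]
        _ ≤ (n : ℝ) := hT
    haveI hhaar : (μH[(n : ℝ)] : Measure E).IsAddHaarMeasure := by
      have := hausdorff_isAddHaar E
      rwa [hdim] at this
    calc μH[(n : ℝ)] (T '' A) = μH[(n : ℝ)] (φ '' (L '' A)) := by rw [himg]
      _ = μH[(n : ℝ)] (L '' A) :=
          φ.isometry.hausdorffMeasure_image (Or.inl (by positivity)) _
      _ = ENNReal.ofReal |LinearMap.det L| * μH[(n : ℝ)] A :=
          Measure.addHaar_image_linearMap _ L A
      _ ≤ 1 * μH[(n : ℝ)] A := by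
          gcongr
          exact ENNReal.ofReal_le_one.mpr hdet
      _ = μH[(n : ℝ)] A := one_mul _
  · -- non-injective case: rank < n, image is null
    have hker : finrank ℝ (LinearMap.ker T) ≠ 0 := by
      rw [← LinearMap.ker_eq_bot] at hinj
      simp only [ne_eq, Submodule.finrank_eq_zero]
      exact hinj
    have hK : finrank ℝ K < n := by
      have h2 := LinearMap.finrank_range_add_finrank_ker T
      rw [hdim, ← hKdef] at h2
      omega
    set m := finrank ℝ K with hm
    let ψ : EuclideanSpace ℝ (Fin m) →ₗᵢ[ℝ] F :=
      K.subtypeₗᵢ.comp (stdOrthonormalBasis ℝ K).repr.symm.toLinearIsometry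
    have hsub : T '' A ⊆ ψ '' Set.univ := by
      rintro y ⟨x, -, rfl⟩
      exact ⟨(stdOrthonormalBasis ℝ K).repr ⟨T x, LinearMap.mem_range_self T x⟩, trivial, by
        simp [ψ]⟩
    calc μH[(n : ℝ)] (T '' A) ≤ μH[(n : ℝ)] (ψ '' Set.univ) := measure_mono hsub
      _ = μH[(n : ℝ)] (Set.univ : Set (EuclideanSpace ℝ (Fin m))) :=
          ψ.isometry.hausdorffMeasure_image (Or.inl (by positivity)) _
      _ = 0 := by
          rw [Real.hausdorffMeasure_of_finrank_lt (by
            rw [finrank_euclideanSpace, Fintype.card_fin]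
            exact_mod_cast hK)]
          rfl
      _ ≤ μH[(n : ℝ)] A := zero_le
end
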